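/- Let S be a regular line spread of a hyperplane Σ∞ of PG(4,q), with transversal lines g, g^q in the quadratic extension PG(3,q^2) of Σ∞. Let K be a ruled cubic surface in PG(4,q) with line directrix b ∈ S such that Σ∞ ∩ K = b. If for every spread line L ∈ S distinct from b, the extension of K to PG(4,q^2) contains the points g ∩ L' and g^q ∩ L' (where L' is the extension of L), then the extension of K contains the transversal lines g and g^q entirely. -/

import Mathlib

set_option linter.unusedSectionVars false


open Projectivization

variable (F E : Type) [Field F] [Fintype F] [Field E] [Algebra F E]

/-- The points of `PG(4,q)` over the field `F` of order `q`. -/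
abbrev PGPt := Projectivization F (Fin 5 → F)

/-- The points of the quadratic extension `PG(4,q²)` over `E`. -/
abbrev PGPtE := Projectivization E (Fin 5 → E)

/-- Coordinatewise inclusion of `F⁵` into `E⁵`. -/
def toE (v : Fin 5 → F) : Fin 5 → E := fun i => algebraMap F E (v i)

/-- The extension to `E` of an `F`-subspace of `F⁵`. -/
def extSub (U : Submodule F (Fin 5 → F)) : Submodule E (Fin 5 → E) :=
  Submodule.span E (toE F E '' (U : Set (Fin 5 → F)))

/-- The point set in `PG(4,q²)` of the extension of a subspace of `PG(4,q)`. -/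
def extSet (U : Submodule F (Fin 5 → F)) : Set (PGPtE E) :=
  {p | p.submodule ≤ extSub F E U}

/-- The base change to `E⁵` of a linear automorphism of `F⁵` (via its matrix). -/
def extMap (g : (Fin 5 → F) ≃ₗ[F] (Fin 5 → F)) (v : Fin 5 → E) : Fin 5 → E :=
  ((LinearMap.toMatrix' (g : (Fin 5 → F) →ₗ[F] (Fin 5 → F))).map (algebraMap F E)).mulVec v

/-- A line of `PG(4,q²)`. -/
def IsLineE (S : Set (PGPtE E)) : Prop :=
  ∃ W : Submodule E (Fin 5 → E), Module.finrank E W = 2 ∧ S = {p | p.submodule ≤ W}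

/-- The `F`-rational points of `PG(4,q²)`. -/
def FRat : Set (PGPtE E) :=
  {p | ∃ v : Fin 5 → F, v ≠ 0 ∧ p.submodule = Submodule.span E {toE F E v}}

/-- `S` is a line spread of the hyperplane of `PG(4,q)` determined by `W`
(lines recorded as rank-2 `F`-subspaces). -/
def IsSpread (W : Submodule F (Fin 5 → F)) (S : Set (Submodule F (Fin 5 → F))) : Prop :=
  (∀ U ∈ S, Module.finrank F U = 2 ∧ U ≤ W) ∧
  (∀ U ∈ S, ∀ U' ∈ S, U ≠ U' → U ⊓ U' = ⊥) ∧
  (∀ v ∈ W, v ≠ 0 → ∃ U ∈ S, v ∈ U)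

/-- The ruled cubic surface in `PG(4,q)` determined by the projective transformation `g`
(image of the standard scroll ruling a line and a conic by a projectivity). -/
def RuledCubic (g : (Fin 5 → F) ≃ₗ[F] (Fin 5 → F)) : Set (PGPt F) :=
  {p | ∃ a b s t : F, (a ≠ 0 ∨ b ≠ 0) ∧ (s ≠ 0 ∨ t ≠ 0) ∧
    p.submodule = Submodule.span F {g ![s * a, s * b, t * a ^ 2, t * (a * b), t * b ^ 2]}}

/-- The extension to `PG(4,q²)` of the ruled cubic surface determined by `g`. -/
def RuledCubicExt (g : (Fin 5 → F) ≃ₗ[F] (Fin 5 → F)) : Set (PGPtE E) :=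
  {p | ∃ a b s t : E, (a ≠ 0 ∨ b ≠ 0) ∧ (s ≠ 0 ∨ t ≠ 0) ∧
    p.submodule = Submodule.span E
      {extMap F E g ![s * a, s * b, t * a ^ 2, t * (a * b), t * b ^ 2]}}


section Helpers

open Finset in
/-- reconstruction of a vector from its coordinates w.r.t. a basis of `E` over `F` -/
lemma sum_pic (B : Module.Basis (Fin 2) F E) (v : Fin 5 → E) :
    ∑ k : Fin 2, B k • toE F E (fun i => B.repr (v i) k) = v := by
  funext i
  rw [Finset.sum_apply]
  have : ∀ k : Fin 2, (B k • toE F E (fun i => B.repr (v i) k)) i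
      = B.repr (v i) k • B k := by
    intro k
    simp [toE, Algebra.smul_def, mul_comm]
  simp only [this]
  exact B.sum_repr (v i)

lemma pic_toE (B : Module.Basis (Fin 2) F E) (u : Fin 5 → F) (k : Fin 2) :
    (fun i => B.repr (toE F E u i) k) = (B.repr 1 k) • u := by
  funext i
  simp [toE, Algebra.algebraMap_eq_smul_one, mul_comm]

lemma mem_extSub_iff (B : Module.Basis (Fin 2) F E) {U : Submodule F (Fin 5 → F)} {v : Fin 5 → E} :
    v ∈ extSub F E U ↔ ∀ k : Fin 2, (fun i => B.repr (v i) k) ∈ U := by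
  constructor
  · intro hv
    refine Submodule.span_induction ?_ ?_ ?_ ?_ hv
    · rintro x ⟨u, hu, rfl⟩ k
      rw [pic_toE]
      exact U.smul_mem _ hu
    · intro k
      have : (fun i => B.repr ((0 : Fin 5 → E) i) k) = (0 : Fin 5 → F) := by
        funext i; simp
      rw [this]; exact U.zero_mem
    · intro x y _ _ hx hy k
      have : (fun i => B.repr ((x + y) i) k)
          = (fun i => B.repr (x i) k) + (fun i => B.repr (y i) k) := by
        funext i; simp
      rw [this]; exact U.add_mem (hx k) (hy k)
    · intro e x _ hx j
      have key : (fun i => B.repr ((e • x) i) j)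
          = ∑ k : Fin 2, B.repr (e * B k) j • (fun i => B.repr (x i) k) := by
        funext i
        rw [Finset.sum_apply]
        have hx' : e * x i = ∑ k : Fin 2, B.repr (x i) k • (e * B k) := by
          conv_lhs => rw [← B.sum_repr (x i)]
          rw [Finset.mul_sum]
          congr 1; funext k
          rw [mul_smul_comm]
        have : B.repr (e * x i) j = ∑ k : Fin 2, B.repr (x i) k • B.repr (e * B k) j := by
          rw [hx']
          simp [Finsupp.finset_sum_apply]
        rw [Pi.smul_apply, smul_eq_mul, this]
        congr 1; funext k
        simp [mul_comm]
      rw [key]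
      exact Submodule.sum_mem _ fun k _ => U.smul_mem _ (hx k)
  · intro h
    rw [← sum_pic F E B v]
    exact Submodule.sum_mem _ fun k _ =>
      Submodule.smul_mem _ _ (Submodule.subset_span ⟨_, h k, rfl⟩)

lemma extSub_inf (B : Module.Basis (Fin 2) F E) {U U' : Submodule F (Fin 5 → F)}
    (h : U ⊓ U' = ⊥) : extSub F E U ⊓ extSub F E U' = ⊥ := by
  rw [eq_bot_iff]
  intro v hv
  rw [Submodule.mem_inf] at hv
  obtain ⟨hv1, hv2⟩ := hv
  rw [mem_extSub_iff F E B] at hv1 hv2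
  have hz : ∀ k : Fin 2, (fun i => B.repr (v i) k) = (0 : Fin 5 → F) := by
    intro k
    have : (fun i => B.repr (v i) k) ∈ U ⊓ U' := ⟨hv1 k, hv2 k⟩
    rw [h] at this
    simpa using this
  have h0 : toE F E (0 : Fin 5 → F) = 0 := by funext i; simp [toE]
  have : v = 0 := by
    rw [← sum_pic F E B v]
    simp only [hz, h0, smul_zero]
    simp
  simp [this]

lemma toE_linear (a b : F) (x y : Fin 5 → F) :
    toE F E (a • x + b • y) = algebraMap F E a • toE F E x + algebraMap F E b • toE F E y := by
  funext i
  simp [toE, Algebra.smul_def]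

lemma extSub_span_pair (x y : Fin 5 → F) :
    extSub F E (Submodule.span F {x, y}) = Submodule.span E {toE F E x, toE F E y} := by
  apply le_antisymm
  · rw [extSub, Submodule.span_le]
    rintro - ⟨u, hu, rfl⟩
    rcases Submodule.mem_span_pair.1 hu with ⟨a, b, rfl⟩
    rw [toE_linear]
    exact Submodule.add_mem _
      (Submodule.smul_mem _ _ (Submodule.subset_span (Set.mem_insert _ _)))
      (Submodule.smul_mem _ _ (Submodule.subset_span (Set.mem_insert_of_mem _ rfl)))
  · rw [Submodule.span_le]
    rintro - (rfl | rfl)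
    · exact Submodule.subset_span ⟨x, Submodule.subset_span (Set.mem_insert _ _), rfl⟩
    · exact Submodule.subset_span
        ⟨y, Submodule.subset_span (Set.mem_insert_of_mem _ rfl), rfl⟩

lemma extMap_toE (g : (Fin 5 → F) ≃ₗ[F] (Fin 5 → F)) (v : Fin 5 → F) :
    extMap F E g (toE F E v) = toE F E (g v) := by
  have hg : (LinearMap.toMatrix' (g : (Fin 5 → F) →ₗ[F] (Fin 5 → F))).mulVec v = g v := by
    rw [← Matrix.toLin'_apply, Matrix.toLin'_toMatrix']
    rfl
  funext i
  rw [← hg]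
  simp [extMap, toE, Matrix.mulVec, dotProduct, Matrix.map_apply, ← map_mul, ← map_sum]

lemma extMap_lincomb (g : (Fin 5 → F) ≃ₗ[F] (Fin 5 → F)) (a b : E) (v w : Fin 5 → E) :
    extMap F E g (a • v + b • w) = a • extMap F E g v + b • extMap F E g w := by
  simp [extMap, Matrix.mulVec_add, Matrix.mulVec_smul]

lemma pgpte_finite [Fintype E] : Finite (PGPtE E) := by
  unfold PGPtE Projectivization
  infer_instance

lemma line_ncard [Fintype E] (W2 : Submodule E (Fin 5 → E)) (h2 : Module.finrank E ↥W2 = 2) :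
    {p : PGPtE E | p.submodule ≤ W2}.ncard = Fintype.card E + 1 := by
  haveI : Finite (PGPtE E) := pgpte_finite E
  haveI : Module.Finite E ↥W2 := Module.finite_of_finrank_eq_succ h2
  let b : Module.Basis (Fin 2) E ↥W2 := Module.finBasisOfFinrankEq E ↥W2 h2
  set u0 : Fin 5 → E := (b 0 : Fin 5 → E) with hu0
  set u1 : Fin 5 → E := (b 1 : Fin 5 → E) with hu1
  have hind : ∀ a c : E, a • u0 + c • u1 = 0 → a = 0 ∧ c = 0 := by
    intro a c h
    have h' : a • b 0 + c • b 1 = (0 : ↥W2) := by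
      apply Subtype.coe_injective
      push_cast
      exact h
    have hli := Fintype.linearIndependent_iff.mp b.linearIndependent ![a, c] ?_
    · exact ⟨hli 0, hli 1⟩
    · rw [Fin.sum_univ_two]
      simp only [Matrix.cons_val_zero, Matrix.cons_val_one, Matrix.head_cons]
      exact h'
  have hmemW2 : ∀ a c : E, a • u0 + c • u1 ∈ W2 := fun a c =>
    W2.add_mem (W2.smul_mem _ (b 0).2) (W2.smul_mem _ (b 1).2)
  have hspan : ∀ v, v ∈ W2 → ∃ a c : E, a • u0 + c • u1 = v := by
    intro v hv
    have := b.sum_repr ⟨v, hv⟩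
    rw [Fin.sum_univ_two] at this
    refine ⟨b.repr ⟨v, hv⟩ 0, b.repr ⟨v, hv⟩ 1, ?_⟩
    have := congrArg (Subtype.val) this
    push_cast at this
    exact this
  have hu1ne : u1 ≠ 0 := by
    intro h
    have := hind 0 1 (by rw [h]; simp)
    exact one_ne_zero this.2
  have hψne : ∀ c : E, u0 + c • u1 ≠ 0 := by
    intro c h
    have := hind 1 c (by rw [one_smul]; exact h)
    exact one_ne_zero this.1
  let ψ : E → PGPtE E := fun c => Projectivization.mk E (u0 + c • u1) (hψne c)
  have hset : {p : PGPtE E | p.submodule ≤ W2} = insert (Projectivization.mk E u1 hu1ne)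
      (Set.range ψ) := by
    ext p
    constructor
    · intro hp
      have hr : p.rep ∈ W2 := by
        have := p.submodule_eq
        have hmem : p.rep ∈ p.submodule := by
          rw [this]; exact Submodule.mem_span_singleton_self _
        exact hp hmem
      obtain ⟨a, c, hac⟩ := hspan p.rep hr
      by_cases ha : a = 0
      · left
        subst ha
        rw [zero_smul, zero_add] at hac
        have hc : c ≠ 0 := by
          rintro rfl
          rw [zero_smul] at hac
          exact p.rep_nonzero hac.symm
        rw [← p.mk_rep]
        rw [Projectivization.mk_eq_mk_iff']
        exact ⟨c, hac⟩
      · right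
        refine ⟨c / a, ?_⟩
        show Projectivization.mk E (u0 + (c/a) • u1) _ = p
        rw [← p.mk_rep, Projectivization.mk_eq_mk_iff']
        refine ⟨a⁻¹, ?_⟩
        rw [← hac]
        rw [smul_add, smul_smul, smul_smul]
        congr 1
        · rw [inv_mul_cancel₀ ha, one_smul]
        · congr 1
          field_simp
    · intro hp
      rcases hp with hp | ⟨c, rfl⟩
      · subst hp
        rw [Set.mem_setOf_eq, Projectivization.submodule_mk, Submodule.span_singleton_le_iff_mem]
        exact (b 1).2
      · rw [Set.mem_setOf_eq, Projectivization.submodule_mk, Submodule.span_singleton_le_iff_mem]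
        simpa using hmemW2 1 c
  have hnotin : Projectivization.mk E u1 hu1ne ∉ Set.range ψ := by
    rintro ⟨c, hc⟩
    rw [Projectivization.mk_eq_mk_iff] at hc
    obtain ⟨a, ha⟩ := hc
    have ha' : (a : E) • u1 = u0 + c • u1 := ha
    have h2 : (u0 + c • u1) - (a : E) • u1 = 0 := sub_eq_zero.mpr ha'.symm
    have : (1 : E) • u0 + (c - (a : E)) • u1 = 0 := by
      rw [one_smul, sub_smul, ← h2]
      abel
    exact one_ne_zero (hind _ _ this).1
  have hinj : Function.Injective ψ := by
    intro c c' hc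
    rw [Projectivization.mk_eq_mk_iff] at hc
    obtain ⟨a, ha⟩ := hc
    have ha' : (a : E) • (u0 + c' • u1) = u0 + c • u1 := ha
    have h2 : ((a : E) • u0 + (a : E) • (c' • u1)) - (u0 + c • u1) = 0 := by
      rw [← smul_add]
      exact sub_eq_zero.mpr ha'
    have hexp : ((a : E) - 1) • u0 + ((a : E) * c' - c) • u1 = 0 := by
      rw [sub_smul, sub_smul, one_smul, mul_smul, ← h2]
      abel
    obtain ⟨h1', h2'⟩ := hind _ _ hexp
    have ha1 : (a : E) = 1 := by linear_combination h1'
    rw [ha1, one_mul] at h2'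
    linear_combination -h2'
  rw [hset, Set.ncard_insert_of_notMem hnotin (Set.toFinite _), ← Set.image_univ,
    Set.ncard_image_of_injective _ hinj, Set.ncard_univ, Nat.card_eq_fintype_card]

lemma submodule_vec_ncard {d : ℕ} (U : Submodule F (Fin 5 → F)) (hd : Module.finrank F ↥U = d) :
    ((U : Set (Fin 5 → F)) \ {0}).ncard = Fintype.card F ^ d - 1 := by
  haveI : Fintype ↥U := Fintype.ofFinite _
  have h1 : ((U : Set (Fin 5 → F))).ncard = Fintype.card F ^ d := by
    rw [← Nat.card_coe_set_eq, SetLike.coe_sort_coe, Nat.card_eq_fintype_card,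
      Module.card_eq_pow_finrank (K := F) (V := ↥U), hd]
  rw [Set.ncard_diff_singleton_of_mem (by simpa using U.zero_mem), h1]

lemma spread_ncard (W : Submodule F (Fin 5 → F)) (hW : Module.finrank F ↥W = 4)
    (S : Set (Submodule F (Fin 5 → F))) (hS : IsSpread F W S) :
    S.ncard = Fintype.card F ^ 2 + 1 := by
  classical
  set n := Fintype.card F with hn
  have hn2 : 2 ≤ n := Fintype.one_lt_card
  haveI : Finite (Submodule F (Fin 5 → F)) :=
    Finite.of_injective (fun U => (U : Set (Fin 5 → F))) SetLike.coe_injective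
  have hSfin : S.Finite := Set.toFinite S
  set 𝒮 : Finset (Submodule F (Fin 5 → F)) := hSfin.toFinset with h𝒮
  let t : Submodule F (Fin 5 → F) → Finset (Fin 5 → F) :=
    fun U => ((U : Set (Fin 5 → F)) \ {0}).toFinite.toFinset
  have hmemt : ∀ U v, v ∈ t U ↔ v ∈ U ∧ v ≠ 0 := by
    intro U v
    rw [Set.Finite.mem_toFinset, Set.mem_diff, Set.mem_singleton_iff, SetLike.mem_coe]
  have hcover : 𝒮.biUnion t = ((W : Set (Fin 5 → F)) \ {0}).toFinite.toFinset := by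
    ext v
    simp only [Finset.mem_biUnion, Set.Finite.mem_toFinset, Set.mem_diff,
      Set.mem_singleton_iff, h𝒮]
    constructor
    · rintro ⟨U, hU, hv⟩
      rw [hmemt] at hv
      exact ⟨(hS.1 U hU).2 hv.1, hv.2⟩
    · rintro ⟨hvW, hv0⟩
      obtain ⟨U, hU, hvU⟩ := hS.2.2 v hvW hv0
      exact ⟨U, by simpa using hU, (hmemt U v).2 ⟨hvU, hv0⟩⟩
  have hdisj : ∀ U ∈ 𝒮, ∀ U' ∈ 𝒮, U ≠ U' → Disjoint (t U) (t U') := by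
    intro U hU U' hU' hne
    rw [Finset.disjoint_left]
    intro v hv hv'
    rw [hmemt] at hv hv'
    have : v ∈ U ⊓ U' := ⟨hv.1, hv'.1⟩
    rw [hS.2.1 U (by simpa [h𝒮] using hU) U' (by simpa [h𝒮] using hU') hne] at this
    exact hv.2 (by simpa using this)
  have hcardt : ∀ U ∈ 𝒮, (t U).card = n ^ 2 - 1 := by
    intro U hU
    have := submodule_vec_ncard F U (hS.1 U (by simpa [h𝒮] using hU)).1
    rwa [Set.ncard_eq_toFinset_card _ (Set.toFinite _)] at this
  have hWcard : (((W : Set (Fin 5 → F)) \ {0}).toFinite.toFinset).card = n ^ 4 - 1 := by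
    have := submodule_vec_ncard F W hW
    rwa [Set.ncard_eq_toFinset_card _ (Set.toFinite _)] at this
  have hsum : 𝒮.card * (n ^ 2 - 1) = n ^ 4 - 1 := by
    rw [← hWcard, ← hcover, Finset.card_biUnion hdisj]
    rw [Finset.sum_congr rfl hcardt, Finset.sum_const, smul_eq_mul]
  have hfact : (n ^ 2 + 1) * (n ^ 2 - 1) = n ^ 4 - 1 := by
    have h1 : 1 ≤ n ^ 2 := Nat.one_le_pow _ _ (by omega)
    have h4 : n ^ 4 = n ^ 2 * n ^ 2 := by ring
    obtain ⟨k, hk⟩ : ∃ k, n ^ 2 = k + 1 := ⟨n ^ 2 - 1, by omega⟩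
    rw [h4, hk, Nat.add_sub_cancel]
    exact (Nat.sub_eq_of_eq_add (by ring)).symm
  have hpos : 0 < n ^ 2 - 1 := by
    have : 4 ≤ n ^ 2 := by nlinarith
    omega
  have : 𝒮.card = n ^ 2 + 1 :=
    Nat.eq_of_mul_eq_mul_right hpos (by rw [hsum, hfact])
  rw [Set.ncard_eq_toFinset_card _ hSfin]
  exact this

lemma gvec_ne (g : (Fin 5 → F) ≃ₗ[F] (Fin 5 → F)) (v : Fin 5 → F) (hv : v ≠ 0) :
    g v ≠ 0 := by
  intro h
  exact hv (by simpa using g.injective (by simpa using h))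

lemma Ub_eq (g : (Fin 5 → F) ≃ₗ[F] (Fin 5 → F)) (Ub : Submodule F (Fin 5 → F))
    (hdir : {p : PGPt F | p.submodule ≤ Ub} =
      {p : PGPt F | ∃ s t : F, (s ≠ 0 ∨ t ≠ 0) ∧
        p.submodule = Submodule.span F {g ![s, t, 0, 0, 0]}}) :
    Ub = Submodule.span F {g ![1, 0, 0, 0, 0], g ![0, 1, 0, 0, 0]} := by
  have hvec : ∀ s t : F, (![s, t, 0, 0, 0] : Fin 5 → F)
      = s • ![1, 0, 0, 0, 0] + t • ![0, 1, 0, 0, 0] := by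
    intro s t; funext i; fin_cases i <;> simp
  have he0 : (![1, 0, 0, 0, 0] : Fin 5 → F) ≠ 0 := by
    intro h; simpa using congrFun h 0
  have he1 : (![0, 1, 0, 0, 0] : Fin 5 → F) ≠ 0 := by
    intro h; simpa using congrFun h 1
  apply le_antisymm
  · intro v hv
    rcases eq_or_ne v 0 with rfl | hv0
    · exact Submodule.zero_mem _
    have hmk : Projectivization.mk F v hv0 ∈ {p : PGPt F | p.submodule ≤ Ub} := by
      rw [Set.mem_setOf_eq, Projectivization.submodule_mk,
        Submodule.span_singleton_le_iff_mem]
      exact hv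
    rw [hdir] at hmk
    obtain ⟨s, t, hst, hsp⟩ := hmk
    have hvmem : v ∈ Submodule.span F {g ![s, t, 0, 0, 0]} := by
      rw [← hsp, Projectivization.submodule_mk]
      exact Submodule.mem_span_singleton_self v
    obtain ⟨a, ha⟩ := Submodule.mem_span_singleton.1 hvmem
    have hg : g ![s, t, 0, 0, 0] = s • g ![1, 0, 0, 0, 0] + t • g ![0, 1, 0, 0, 0] := by
      conv_lhs => rw [hvec s t]
      rw [map_add, map_smul, map_smul]
    rw [← ha, hg]
    exact Submodule.smul_mem _ _ (Submodule.add_mem _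
      (Submodule.smul_mem _ _ (Submodule.subset_span (Set.mem_insert _ _)))
      (Submodule.smul_mem _ _ (Submodule.subset_span (Set.mem_insert_of_mem _ rfl))))
  · rw [Submodule.span_le]
    intro x hx
    have key : ∀ (s t : F), (s ≠ 0 ∨ t ≠ 0) → g ![s, t, 0, 0, 0] ∈ Ub := by
      intro s t hst
      have hne : (![s, t, 0, 0, 0] : Fin 5 → F) ≠ 0 := by
        intro h
        rcases hst with h' | h'
        · exact h' (by simpa using congrFun h 0)
        · exact h' (by simpa using congrFun h 1)
      have hgne := gvec_ne F g _ hne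
      have h1 : Projectivization.mk F (g ![s, t, 0, 0, 0]) hgne ∈
          {p : PGPt F | ∃ s t : F, (s ≠ 0 ∨ t ≠ 0) ∧
            p.submodule = Submodule.span F {g ![s, t, 0, 0, 0]}} :=
        ⟨s, t, hst, by rw [Projectivization.submodule_mk]⟩
      rw [← hdir] at h1
      rw [Set.mem_setOf_eq, Projectivization.submodule_mk,
        Submodule.span_singleton_le_iff_mem] at h1
      exact h1
    rcases Set.mem_insert_iff.mp hx with rfl | hx
    · exact key 1 0 (Or.inl one_ne_zero)
    · rw [Set.mem_singleton_iff.mp hx]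
      exact key 0 1 (Or.inr one_ne_zero)

lemma key_lemma (hE2 : Module.finrank F E = 2)
    (W : Submodule F (Fin 5 → F)) (hW : Module.finrank F ↥W = 4)
    (S : Set (Submodule F (Fin 5 → F))) (hS : IsSpread F W S)
    (G : Set (PGPtE E)) (hG : IsLineE E G)
    (hGmeet : ∀ U ∈ S, (G ∩ extSet F E U).ncard = 1)
    (g : (Fin 5 → F) ≃ₗ[F] (Fin 5 → F))
    (Ub : Submodule F (Fin 5 → F)) (hUb : Ub ∈ S)
    (hUbeq : Ub = Submodule.span F {g ![1, 0, 0, 0, 0], g ![0, 1, 0, 0, 0]})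
    (hmain : ∀ U ∈ S, U ≠ Ub → ∀ p ∈ G ∩ extSet F E U, p ∈ RuledCubicExt F E g) :
    G ⊆ RuledCubicExt F E g := by
  classical
  haveI : FiniteDimensional F E := FiniteDimensional.of_finrank_eq_succ hE2
  let B : Module.Basis (Fin 2) F E := Module.finBasisOfFinrankEq F E hE2
  haveI : Fintype E := Module.fintypeOfFintype B
  haveI : Finite (PGPtE E) := pgpte_finite E
  have hcardE : Fintype.card E = Fintype.card F ^ 2 := by
    rw [Module.card_eq_pow_finrank (K := F) (V := E), hE2]
  obtain ⟨W2, hW2rank, hGeq⟩ := hG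
  have hGcard : G.ncard = Fintype.card E + 1 := by
    rw [hGeq]; exact line_ncard E W2 hW2rank
  have hmeet : ∀ U ∈ S, ∃ x, G ∩ extSet F E U = {x} :=
    fun U hU => Set.ncard_eq_one.mp (hGmeet U hU)
  choose! f hf using hmeet
  have hfmem : ∀ U ∈ S, f U ∈ G ∩ extSet F E U := by
    intro U hU; rw [hf U hU]; rfl
  have hinj : Set.InjOn f S := by
    intro U hU U' hU' hEq
    by_contra hne
    have h1 : (f U).submodule ≤ extSub F E U := (hfmem U hU).2
    have h2 : (f U).submodule ≤ extSub F E U' := by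
      rw [hEq]; exact (hfmem U' hU').2
    have hrep0 : (f U).rep ∈ (f U).submodule := by
      rw [Projectivization.submodule_eq]
      exact Submodule.mem_span_singleton_self _
    have hrep : (f U).rep ∈ extSub F E U ⊓ extSub F E U' := ⟨h1 hrep0, h2 hrep0⟩
    rw [extSub_inf F E B (hS.2.1 U hU U' hU' hne)] at hrep
    exact (f U).rep_nonzero (by simpa using hrep)
  have himg : f '' S = G := by
    apply Set.eq_of_subset_of_ncard_le
    · rintro - ⟨U, hU, rfl⟩
      exact (hfmem U hU).1
    · rw [Set.ncard_image_of_injOn hinj, hGcard, spread_ncard F W hW S hS, hcardE]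
    · exact Set.toFinite G
  intro p hpG
  obtain ⟨U, hU, hfU⟩ : ∃ U ∈ S, f U = p := by
    have : p ∈ f '' S := by rw [himg]; exact hpG
    obtain ⟨U, hU, hfU⟩ := this
    exact ⟨U, hU, hfU⟩
  rcases eq_or_ne U Ub with rfl | hne
  case inr => exact hmain U hU hne p ⟨hpG, by rw [← hfU]; exact (hfmem U hU).2⟩
  -- the point on the extension of the directrix
  have hpU : p.submodule ≤ extSub F E U := by
    rw [← hfU]; exact (hfmem U hU).2
  have hrep : p.rep ∈ extSub F E U := by
    apply hpU
    rw [Projectivization.submodule_eq]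
    exact Submodule.mem_span_singleton_self _
  rw [hUbeq, extSub_span_pair] at hrep
  obtain ⟨a, c, hac⟩ := Submodule.mem_span_pair.1 hrep
  rw [← extMap_toE, ← extMap_toE] at hac
  have hvec : a • toE F E ![1, 0, 0, 0, 0] + c • toE F E ![0, 1, 0, 0, 0]
      = (![a, c, 0, 0, 0] : Fin 5 → E) := by
    funext i; fin_cases i <;> simp [toE]
  have hrepeq : p.rep = extMap F E g ![a, c, 0, 0, 0] := by
    rw [← hvec, extMap_lincomb]
    exact hac.symm
  have hne' : a ≠ 0 ∨ c ≠ 0 := by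
    by_contra h
    push_neg at h
    obtain ⟨rfl, rfl⟩ := h
    apply p.rep_nonzero
    rw [hrepeq]
    have : (![(0:E), 0, 0, 0, 0] : Fin 5 → E) = 0 := by funext i; fin_cases i <;> simp
    rw [this]
    simp [extMap, Matrix.mulVec_zero]
  refine ⟨a, c, 1, 0, hne', Or.inl one_ne_zero, ?_⟩
  have hv2 : (![1 * a, 1 * c, 0 * a ^ 2, 0 * (a * c), 0 * c ^ 2] : Fin 5 → E)
      = ![a, c, 0, 0, 0] := by
    funext i; fin_cases i <;> ring
  rw [hv2, Projectivization.submodule_eq, hrepeq]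

end Helpers

/-- let `S` be a regular spread of the hyperplane `Σ∞ = PG(W)` of
`PG(4,q)`, with (conjugate) transversal lines `G`, `Gq` in the quadratic extension, and
let `K` be a ruled cubic surface with line directrix `b ∈ S` such that `Σ∞ ∩ K = b`.
If for every spread line `L ∈ S`, `L ≠ b`, the extension of `K` contains the points
`G ∩ L'` and `Gq ∩ L'`, then it contains the transversal lines `G` and `Gq` entirely. -/
theorem stmt17 (q : ℕ) (hqF : Fintype.card F = q) (hE2 : Module.finrank F E = 2)
    (σ : E ≃ₐ[F] E) (hσ : σ ≠ AlgEquiv.refl)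
    (W : Submodule F (Fin 5 → F)) (hW : Module.finrank F W = 4)
    (S : Set (Submodule F (Fin 5 → F))) (hS : IsSpread F W S)
    (G Gq : Set (PGPtE E)) (hG : IsLineE E G) (hGq : IsLineE E Gq)
    (hGW : G ⊆ extSet F E W) (hGqW : Gq ⊆ extSet F E W)
    (hGrat : Disjoint G (FRat F E)) (hGqrat : Disjoint Gq (FRat F E))
    (hGmeet : ∀ U ∈ S, (G ∩ extSet F E U).ncard = 1 ∧ (Gq ∩ extSet F E U).ncard = 1)
    (hconj : ∀ (v : Fin 5 → E) (hv : v ≠ 0) (hv' : (fun i => σ (v i)) ≠ 0),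
      Projectivization.mk E v hv ∈ G ↔
        Projectivization.mk E (fun i => σ (v i)) hv' ∈ Gq)
    (g : (Fin 5 → F) ≃ₗ[F] (Fin 5 → F)) (K : Set (PGPt F)) (hK : K = RuledCubic F g)
    (Ub : Submodule F (Fin 5 → F)) (hUb : Ub ∈ S)
    (hdir : {p : PGPt F | p.submodule ≤ Ub} =
      {p : PGPt F | ∃ s t : F, (s ≠ 0 ∨ t ≠ 0) ∧
        p.submodule = Submodule.span F {g ![s, t, 0, 0, 0]}})
    (hSigK : {p : PGPt F | p.submodule ≤ W} ∩ K = {p : PGPt F | p.submodule ≤ Ub})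
    (hmain : ∀ U ∈ S, U ≠ Ub →
      (∀ p ∈ G ∩ extSet F E U, p ∈ RuledCubicExt F E g) ∧
      (∀ p ∈ Gq ∩ extSet F E U, p ∈ RuledCubicExt F E g)) :
    G ⊆ RuledCubicExt F E g ∧ Gq ⊆ RuledCubicExt F E g := by
  have hUbeq := Ub_eq F g Ub hdir
  exact ⟨key_lemma F E hE2 W hW S hS G hG (fun U hU => (hGmeet U hU).1) g Ub hUb hUbeq
      (fun U hU hne => (hmain U hU hne).1),
    key_lemma F E hE2 W hW S hS Gq hGq (fun U hU => (hGmeet U hU).2) g Ub hUb hUbeq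
      (fun U hU hne => (hmain U hU hne).2)⟩
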